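/- Let μ₀, μ₁, μ₂, μ₃, μ₄, λ₀, λ₁, λ₂, λ₃, λ₄ be nonzero complex numbers satisfying λ₀ = (μ₁·μ₄)⁻¹, λ₁ = μ₀⁻¹·μ₂, λ₂ = μ₁·μ₃⁻¹, λ₃ = μ₂⁻¹·μ₄, λ₄ = μ₀⁻¹·μ₃, together with 1 + μ₁⁵ = λ₁⁻⁵, λ₃⁵ = 1 + μ₃⁻⁵, and μ₄⁵·(1 + λ₄⁵) = 1. Then (μ₀⁵ − λ₀⁻⁵)·(λ₄¹⁰ + λ₄⁵) = −1. In particular, for fixed values of μ₀ and λ₀ with μ₀⁵ ≠ λ₀⁻⁵, the quantity λ₄⁵ satisfies a quadratic equation and takes at most two values. -/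

import Mathlib

/-- The algebraic relation showing that the space of unobstructed local systems is
one-dimensional: the exponentiated homology relations together with the
unobstructedness equations `1 + μ₁⁵ = λ₁⁻⁵`, `λ₃⁵ = 1 + μ₃⁻⁵`, and
`μ₄⁵·(1 + λ₄⁵) = 1` imply `(μ₀⁵ − λ₀⁻⁵)·(λ₄¹⁰ + λ₄⁵) = −1`; in particular, when
`μ₀⁵ ≠ λ₀⁻⁵`, the quantity `λ₄⁵` satisfies a quadratic equation and takes at most
two values. -/
theorem holonomy_quadratic_relation
    (μ₀ μ₁ μ₂ μ₃ μ₄ l₀ l₁ l₂ l₃ l₄ : ℂ)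
    (hμ₀ : μ₀ ≠ 0) (hμ₁ : μ₁ ≠ 0) (hμ₂ : μ₂ ≠ 0) (hμ₃ : μ₃ ≠ 0) (hμ₄ : μ₄ ≠ 0)
    (hl₀ : l₀ ≠ 0) (hl₁ : l₁ ≠ 0) (hl₂ : l₂ ≠ 0) (hl₃ : l₃ ≠ 0) (hl₄ : l₄ ≠ 0)
    (h0 : l₀ = (μ₁ * μ₄)⁻¹) (h1 : l₁ = μ₀⁻¹ * μ₂) (h2 : l₂ = μ₁ * μ₃⁻¹)
    (h3 : l₃ = μ₂⁻¹ * μ₄) (h4 : l₄ = μ₀⁻¹ * μ₃)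
    (e1 : 1 + μ₁ ^ 5 = l₁⁻¹ ^ 5) (e3 : l₃ ^ 5 = 1 + μ₃⁻¹ ^ 5)
    (e4 : μ₄ ^ 5 * (1 + l₄ ^ 5) = 1) :
    (μ₀ ^ 5 - l₀⁻¹ ^ 5) * (l₄ ^ 10 + l₄ ^ 5) = -1 ∧
    (μ₀ ^ 5 ≠ l₀⁻¹ ^ 5 → ∃ y₁ y₂ : ℂ, ∀ y : ℂ,
      (μ₀ ^ 5 - l₀⁻¹ ^ 5) * (y ^ 2 + y) = -1 → y = y₁ ∨ y = y₂) := by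
  rw [h1] at e1
  rw [h3] at e3
  rw [h4] at e4
  field_simp at e1 e3 e4
  have key : (μ₀ ^ 5 - μ₁ ^ 5 * μ₄ ^ 5) * μ₃ ^ 5 * (μ₃ ^ 5 + μ₀ ^ 5) + μ₀ ^ 10 = 0 := by
    linear_combination μ₃ ^ 5 * e4 - (1 + μ₁ ^ 5) * (μ₀ ^ 5 + μ₃ ^ 5) * e3 -
      (μ₃ ^ 5 + 1) * (μ₀ ^ 5 + μ₃ ^ 5) * e1
  constructor
  · rw [h0, h4]
    rw [inv_inv]
    field_simp
    linear_combination key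
  · intro hq
    obtain ⟨q, hqdef⟩ : ∃ q : ℂ, q = μ₀ ^ 5 - l₀⁻¹ ^ 5 := ⟨_, rfl⟩
    rw [← hqdef]
    have hq0 : q ≠ 0 := hqdef ▸ sub_ne_zero.mpr hq
    obtain ⟨s, hs⟩ := IsAlgClosed.exists_pow_nat_eq (q ^ 2 - 4 * q) (n := 2) (by norm_num)
    refine ⟨(s - q) / (2 * q), (-s - q) / (2 * q), fun y hy => ?_⟩
    have key2 : q * ((y - (s - q) / (2 * q)) * (y - (-s - q) / (2 * q))) = 0 := by
      field_simp
      linear_combination 4 * q * hy - hs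
    rcases mul_eq_zero.mp key2 with h | h
    · exact absurd h hq0
    rcases mul_eq_zero.mp h with h | h
    · exact Or.inl (sub_eq_zero.mp h)
    · exact Or.inr (sub_eq_zero.mp h)
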